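/- Let A be an MRMT matrix (compartmental, with Ã = Δ diagonal with distinct negative entries) such that (A, e₁) is controllable, and let T = diag(1, QU⁻¹), where Q is the orthogonal matrix from the Lanczos algorithm applied to Δ with initial vector q₁ = A(2:n,1)/‖A(2:n,1)‖ and U is the Cholesky factor of QᵗṼQ (so QᵗṼQ = UᵗU with U upper triangular with positive diagonal, Ṽ the diagonal volume matrix with V₁ = 1). Then T⁻¹AT is symmetric tridiagonal with positive entries on the sub- and super-diagonal. -/

import Mathlib

open Matrix

/-- Block-diagonal matrix diag(1, T̃). -/
def blockDiag1 {n : ℕ} (Rt : Matrix (Fin n) (Fin n) ℝ) :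
    Matrix (Fin (n + 1)) (Fin (n + 1)) ℝ :=
  Matrix.of fun i j =>
    if hi : i = 0 then (if j = 0 then 1 else 0)
    else if hj : j = 0 then 0
    else Rt (i.pred hi) (j.pred hj)

lemma blockDiag1_mul {m : ℕ} (X Y : Matrix (Fin m) (Fin m) ℝ) :
    blockDiag1 X * blockDiag1 Y = blockDiag1 (X * Y) := by
  ext i j
  rcases Fin.eq_zero_or_eq_succ i with rfl | ⟨i', rfl⟩ <;>
    rcases Fin.eq_zero_or_eq_succ j with rfl | ⟨j', rfl⟩ <;>
    simp [blockDiag1, mul_apply, Fin.sum_univ_succ, Fin.succ_ne_zero]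

lemma blockDiag1_one {m : ℕ} : blockDiag1 (1 : Matrix (Fin m) (Fin m) ℝ) = 1 := by
  ext i j
  rcases Fin.eq_zero_or_eq_succ i with rfl | ⟨i', rfl⟩ <;>
    rcases Fin.eq_zero_or_eq_succ j with rfl | ⟨j', rfl⟩ <;>
    simp [blockDiag1, one_apply, Fin.succ_ne_zero, (Fin.succ_ne_zero _).symm, Fin.succ_inj]

lemma sandwich_zero_zero {m : ℕ} (X Y : Matrix (Fin (m+1)) (Fin (m+1)) ℝ)
    (A : Matrix (Fin (m+2)) (Fin (m+2)) ℝ) :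
    (blockDiag1 X * A * blockDiag1 Y) 0 0 = A 0 0 := by
  simp [blockDiag1, mul_apply, Fin.sum_univ_succ, Fin.succ_ne_zero]

lemma sandwich_zero_succ {m : ℕ} (X Y : Matrix (Fin (m+1)) (Fin (m+1)) ℝ)
    (A : Matrix (Fin (m+2)) (Fin (m+2)) ℝ) (j : Fin (m+1)) :
    (blockDiag1 X * A * blockDiag1 Y) 0 j.succ = ∑ k, A 0 k.succ * Y k j := by
  simp [blockDiag1, mul_apply, Fin.sum_univ_succ, Fin.succ_ne_zero]

lemma sandwich_succ_zero {m : ℕ} (X Y : Matrix (Fin (m+1)) (Fin (m+1)) ℝ)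
    (A : Matrix (Fin (m+2)) (Fin (m+2)) ℝ) (i : Fin (m+1)) :
    (blockDiag1 X * A * blockDiag1 Y) i.succ 0 = ∑ k, X i k * A k.succ 0 := by
  simp [blockDiag1, mul_apply, Fin.sum_univ_succ, Fin.succ_ne_zero]

lemma sandwich_succ_succ {m : ℕ} (X Y : Matrix (Fin (m+1)) (Fin (m+1)) ℝ)
    (A : Matrix (Fin (m+2)) (Fin (m+2)) ℝ) (i j : Fin (m+1)) :
    (blockDiag1 X * A * blockDiag1 Y) i.succ j.succ
      = (X * A.submatrix Fin.succ Fin.succ * Y) i j := by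
  simp [blockDiag1, mul_apply, Fin.sum_univ_succ, Fin.succ_ne_zero, Finset.sum_mul,
    Finset.mul_sum]


set_option maxHeartbeats 2000000 in
/-- for a controllable MRMT matrix A, with Q the orthogonal matrix
produced by the Lanczos algorithm applied to Δ = Ã with initial vector
q₁ = A(2:n,1)/‖A(2:n,1)‖, and U the Cholesky factor of QᵗṼQ, the matrix
T = diag(1, QU⁻¹) makes T⁻¹AT symmetric tridiagonal with positive entries on
the sub- and super-diagonal. -/
theorem mrmt_stmt17 {n : ℕ} (v : Fin (n + 2) → ℝ)
    (M A : Matrix (Fin (n + 2)) (Fin (n + 2)) ℝ) (B : Fin (n + 2) → ℝ)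
    (hB : B = Pi.single 0 1)
    (hv : ∀ i, 0 < v i) (hv0 : v 0 = 1)
    (hMsym : M.IsSymm)
    (hMirr : ∀ i j : Fin (n + 2), i ≠ j → Relation.TransGen (fun a b => M a b ≠ 0) i j)
    (hMdiag : ∀ i, 0 < M i i)
    (hMoff : ∀ i j, i ≠ j → M i j ≤ 0)
    (hMrow : ∀ i, ∑ j, M i j = 0)
    (hA : A = -(vecMulVec B B) - (Matrix.diagonal v)⁻¹ * M)
    -- A is MRMT: the lower-right block Ã is diagonal, with distinct negative entries
    (hMRMT : ∀ i j : Fin (n + 1), i ≠ j → A i.succ j.succ = 0)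
    (hlamneg : ∀ i : Fin (n + 1), A i.succ i.succ < 0)
    (hdist : Function.Injective fun i : Fin (n + 1) => A i.succ i.succ)
    -- (A, B) is controllable
    (hctrb : (Matrix.of fun i (k : Fin (n + 2)) => ((A ^ (k : ℕ)) *ᵥ B) i).rank = n + 2)
    -- Q from Lanczos applied to Ã with q₁ = A(2:n,1)/‖A(2:n,1)‖
    (Q : Matrix (Fin (n + 1)) (Fin (n + 1)) ℝ)
    (hQorth : Qᵀ * Q = 1)
    (hQ1 : ∀ i : Fin (n + 1),
      Q i 0 = A i.succ 0 / Real.sqrt (∑ j : Fin (n + 1), (A j.succ 0) ^ 2))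
    (hQtri : ∀ i j : Fin (n + 1), ((i : ℕ) + 1 < (j : ℕ) ∨ (j : ℕ) + 1 < (i : ℕ)) →
      (Qᵀ * A.submatrix Fin.succ Fin.succ * Q) i j = 0)
    (hQpos : ∀ i j : Fin (n + 1), (j : ℕ) = (i : ℕ) + 1 →
      0 < (Qᵀ * A.submatrix Fin.succ Fin.succ * Q) i j)
    -- U is the Cholesky factor of QᵗṼQ
    (U : Matrix (Fin (n + 1)) (Fin (n + 1)) ℝ)
    (hUtriang : ∀ i j : Fin (n + 1), j < i → U i j = 0)
    (hUdiag : ∀ i, 0 < U i i)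
    (hU : Uᵀ * U = Qᵀ * Matrix.diagonal (fun i : Fin (n + 1) => v i.succ) * Q)
    (T : Matrix (Fin (n + 2)) (Fin (n + 2)) ℝ)
    (hT : T = blockDiag1 (Q * U⁻¹)) :
    (T⁻¹ * A * T).IsSymm ∧
    (∀ i j : Fin (n + 2), ((i : ℕ) + 1 < (j : ℕ) ∨ (j : ℕ) + 1 < (i : ℕ)) →
      (T⁻¹ * A * T) i j = 0) ∧
    (∀ i j : Fin (n + 2), (j : ℕ) = (i : ℕ) + 1 →
      0 < (T⁻¹ * A * T) i j ∧ 0 < (T⁻¹ * A * T) j i) := by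
  have hvne : ∀ i, v i ≠ 0 := fun i => (hv i).ne'
  have hdinv : (Matrix.diagonal v)⁻¹ = Matrix.diagonal (fun i => (v i)⁻¹) := by
    refine Matrix.inv_eq_right_inv ?_
    rw [Matrix.diagonal_mul_diagonal]
    have : (fun i => v i * (v i)⁻¹) = fun _ : Fin (n+2) => (1:ℝ) :=
      funext fun i => mul_inv_cancel₀ (hvne i)
    rw [this, Matrix.diagonal_one]
  have hAE : ∀ i j, A i j = -(B i * B j) - (v i)⁻¹ * M i j := by
    intro i j
    rw [hA, hdinv]
    simp [vecMulVec_apply, Matrix.diagonal_mul, Matrix.sub_apply]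
  have hBsucc : ∀ k : Fin (n+1), B k.succ = 0 := by
    intro k; rw [hB]; exact Pi.single_eq_of_ne (Fin.succ_ne_zero k) 1
  have hvB : ∀ i, v i * B i = B i := by
    intro i
    by_cases h : i = 0
    · subst h; rw [hv0, one_mul]
    · rw [hB, Pi.single_eq_of_ne h 1, mul_zero]
  have hVA : ∀ i j, v i * A i j = v j * A j i := by
    intro i j
    rw [hAE i j, hAE j i]
    have h1 : v i * (-(B i * B j) - (v i)⁻¹ * M i j) = -(B i * B j) - M i j := by
      rw [mul_sub, mul_neg, ← mul_assoc, hvB, ← mul_assoc, mul_inv_cancel₀ (hvne i), one_mul]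
    have h2 : v j * (-(B j * B i) - (v j)⁻¹ * M j i) = -(B j * B i) - M j i := by
      rw [mul_sub, mul_neg, ← mul_assoc, hvB, ← mul_assoc, mul_inv_cancel₀ (hvne j), one_mul]
    rw [h1, h2, hMsym.apply i j, mul_comm (B j) (B i)]
  have hA0succ : ∀ k : Fin (n+1), A 0 k.succ = v k.succ * A k.succ 0 := by
    intro k
    have h := hVA 0 k.succ
    rwa [hv0, one_mul] at h
  -- there is a positive entry in A(2:n,1)
  have hMc : ∃ k : Fin (n+1), M k.succ 0 ≠ 0 := by
    have key : ∀ a : Fin (n+2), Relation.TransGen (fun a b => M a b ≠ 0) a 0 →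
        a ≠ 0 → ∃ k : Fin (n+1), M k.succ 0 ≠ 0 := by
      intro a h
      induction h using Relation.TransGen.head_induction_on with
      | single h =>
        intro ha
        obtain ⟨k, rfl⟩ := Fin.eq_succ_of_ne_zero ha
        exact ⟨k, h⟩
      | @head a' c h' h IH =>
        intro ha
        by_cases hc : c = 0
        · subst hc
          obtain ⟨k, rfl⟩ := Fin.eq_succ_of_ne_zero ha
          exact ⟨k, h'⟩
        · exact IH hc
    exact key 1 (hMirr 1 0 one_ne_zero) one_ne_zero
  have hcpos : ∃ k : Fin (n+1), 0 < A k.succ 0 := by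
    obtain ⟨k, hk⟩ := hMc
    have hMneg : M k.succ 0 < 0 :=
      lt_of_le_of_ne (hMoff k.succ 0 (Fin.succ_ne_zero k)) hk
    refine ⟨k, ?_⟩
    rw [hAE, hBsucc, zero_mul, neg_zero, zero_sub]
    have hvp : 0 < (v k.succ)⁻¹ := inv_pos.mpr (hv _)
    nlinarith
  set s : ℝ := Real.sqrt (∑ j : Fin (n + 1), (A j.succ 0) ^ 2) with hs_def
  have hs : 0 < s := by
    apply Real.sqrt_pos.mpr
    obtain ⟨k, hk⟩ := hcpos
    exact Finset.sum_pos' (fun i _ => sq_nonneg _)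
      ⟨k, Finset.mem_univ k, by positivity⟩
  have hcQ : ∀ l : Fin (n+1), A l.succ 0 = s * Q l 0 := by
    intro l; rw [hQ1 l]; field_simp
  -- invertibility facts
  have hQQt : Q * Qᵀ = 1 := mul_eq_one_comm.mp hQorth
  have hUbt : U.BlockTriangular id := fun i j h => hUtriang i j h
  have hUdu : IsUnit U.det := by
    rw [Matrix.det_of_upperTriangular hUbt]
    exact (Finset.prod_pos (fun i _ => hUdiag i)).ne'.isUnit
  have hUUinv : U * U⁻¹ = 1 := Matrix.mul_nonsing_inv U hUdu
  have hUinvU : U⁻¹ * U = 1 := Matrix.nonsing_inv_mul U hUdu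
  haveI := U.invertibleOfIsUnitDet hUdu
  have hUinvtri : ∀ i j : Fin (n+1), j < i → U⁻¹ i j = 0 :=
    fun i j h => Matrix.blockTriangular_inv_of_blockTriangular hUbt h
  have hUinvdd : ∀ j, 0 < U⁻¹ j j := by
    intro j
    have hsum : ∑ k, U⁻¹ j k * U k j = U⁻¹ j j * U j j :=
      Finset.sum_eq_single j
        (fun k _ hkj => by
          rcases lt_or_gt_of_ne hkj with hlt | hgt
          · rw [hUinvtri j k hlt, zero_mul]
          · rw [hUtriang k j hgt, mul_zero])
        (fun h => absurd (Finset.mem_univ j) h)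
    have h := congrFun (congrFun hUinvU j) j
    rw [Matrix.mul_apply, hsum, Matrix.one_apply_eq] at h
    have h2 : U⁻¹ j j = (U j j)⁻¹ := eq_inv_of_mul_eq_one_left h
    rw [h2]
    exact inv_pos.mpr (hUdiag j)
  -- inverse of T
  have hTW : T * blockDiag1 (U * Qᵀ) = 1 := by
    rw [hT, blockDiag1_mul]
    have h1 : Q * U⁻¹ * (U * Qᵀ) = 1 := by
      rw [Matrix.mul_assoc, ← Matrix.mul_assoc U⁻¹, hUinvU, Matrix.one_mul, hQQt]
    rw [h1, blockDiag1_one]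
  have hTinv : T⁻¹ = blockDiag1 (U * Qᵀ) := Matrix.inv_eq_right_inv hTW
  -- key identity  U Qᵀ = (Q U⁻¹)ᵀ Ṽ
  have hQD : Qᵀ * Matrix.diagonal (fun i : Fin (n+1) => v i.succ) = Uᵀ * U * Qᵀ := by
    rw [hU, Matrix.mul_assoc, hQQt, Matrix.mul_one]
  have hW : U * Qᵀ = (Q * U⁻¹)ᵀ * Matrix.diagonal (fun i : Fin (n+1) => v i.succ) := by
    have h3 : U⁻¹ᵀ * (Uᵀ * U * Qᵀ) = U * Qᵀ := by
      rw [← Matrix.mul_assoc, ← Matrix.mul_assoc, ← Matrix.transpose_mul, hUUinv,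
        Matrix.transpose_one, Matrix.one_mul]
    rw [Matrix.transpose_mul, Matrix.mul_assoc, hQD, h3]
  have hWe : ∀ j k : Fin (n+1), (U * Qᵀ) j k = (Q * U⁻¹) k j * v k.succ := by
    intro j k
    rw [hW, Matrix.mul_diagonal, Matrix.transpose_apply]
  -- the diagonal block
  have hΔ : A.submatrix Fin.succ Fin.succ
      = Matrix.diagonal (fun i : Fin (n+1) => A i.succ i.succ) := by
    ext i j
    by_cases h : i = j
    · subst h; simp
    · rw [Matrix.submatrix_apply, hMRMT i j h, Matrix.diagonal_apply_ne _ h]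
  set J : Matrix (Fin (n+1)) (Fin (n+1)) ℝ := Qᵀ * A.submatrix Fin.succ Fin.succ * Q
    with hJdef
  have hJt : Jᵀ = J := by
    rw [hJdef, hΔ]
    rw [Matrix.transpose_mul, Matrix.transpose_mul, Matrix.transpose_transpose,
      Matrix.diagonal_transpose, Matrix.mul_assoc]
  have hJsymE : ∀ i j, J j i = J i j := by
    intro i j
    have h := congrFun (congrFun hJt i) j
    rwa [Matrix.transpose_apply] at h
  -- the lower-right block of T⁻¹ A T
  have hWDR : (U * Qᵀ) * A.submatrix Fin.succ Fin.succ * (Q * U⁻¹) = U * J * U⁻¹ := by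
    rw [hJdef]; simp only [Matrix.mul_assoc]
  set G : Matrix (Fin (n+1)) (Fin (n+1)) ℝ := U * J * U⁻¹ with hGdef
  have key : ∀ (P : Matrix (Fin (n+1)) (Fin (n+1)) ℝ) (d : Fin (n+1) → ℝ),
      (Pᵀ * Matrix.diagonal d * P)ᵀ = Pᵀ * Matrix.diagonal d * P := by
    intro P d
    rw [Matrix.transpose_mul, Matrix.transpose_mul, Matrix.transpose_transpose,
      Matrix.diagonal_transpose, Matrix.mul_assoc]
  have hGform : G = (Q * U⁻¹)ᵀ *
      Matrix.diagonal (fun i : Fin (n+1) => v i.succ * A i.succ i.succ) * (Q * U⁻¹) := by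
    rw [← hWDR, hW, hΔ, Matrix.mul_assoc ((Q * U⁻¹)ᵀ), Matrix.diagonal_mul_diagonal]
  have hGt : Gᵀ = G := by
    rw [hGform]
    exact key _ _
  have hGsymE : ∀ i j, G j i = G i j := by
    intro i j
    have h := congrFun (congrFun hGt i) j
    rwa [Matrix.transpose_apply] at h
  -- lower (strictly below the sub-diagonal) entries of G vanish
  have hGlow : ∀ i j : Fin (n+1), (j : ℕ) + 1 < (i : ℕ) → G i j = 0 := by
    intro i j hij
    rw [hGdef, Matrix.mul_apply]
    apply Finset.sum_eq_zero
    intro l _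
    by_cases hl : (j : ℕ) < (l : ℕ)
    · rw [hUinvtri l j (Fin.lt_def.mpr hl), mul_zero]
    · have h0 : (U * J) i l = 0 := by
        rw [Matrix.mul_apply]
        apply Finset.sum_eq_zero
        intro k _
        by_cases hk : (k : ℕ) < (i : ℕ)
        · rw [hUtriang i k (Fin.lt_def.mpr hk), zero_mul]
        · rw [hQtri k l (Or.inr (by omega)), mul_zero]
      rw [h0, zero_mul]
  -- sub-diagonal entries of G
  have hGsub : ∀ i j : Fin (n+1), (i : ℕ) = (j : ℕ) + 1 →
      G i j = U i i * J i j * U⁻¹ j j := by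
    intro i j hij
    rw [hGdef, Matrix.mul_apply]
    rw [Finset.sum_eq_single j
      (fun l _ hlj => by
        rcases lt_or_gt_of_ne hlj with hlt | hgt
        · have h0 : (U * J) i l = 0 := by
            rw [Matrix.mul_apply]
            apply Finset.sum_eq_zero
            intro k _
            by_cases hk : (k : ℕ) < (i : ℕ)
            · rw [hUtriang i k (Fin.lt_def.mpr hk), zero_mul]
            · rw [hQtri k l (Or.inr (by
                have := Fin.lt_def.mp hlt; omega)), mul_zero]
          rw [h0, zero_mul]
        · rw [hUinvtri l j hgt, mul_zero])
      (fun h => absurd (Finset.mem_univ j) h)]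
    have hUJ : (U * J) i j = U i i * J i j := by
      rw [Matrix.mul_apply]
      refine Finset.sum_eq_single i
        (fun k _ hki => by
          rcases lt_or_gt_of_ne hki with hlt | hgt
          · rw [hUtriang i k hlt, zero_mul]
          · rw [hQtri k j (Or.inr (by have := Fin.lt_def.mp hgt; omega)), mul_zero])
        (fun h => absurd (Finset.mem_univ i) h)
    rw [hUJ]
  -- first column / first row of T⁻¹ A T
  have hWc : ∀ i : Fin (n+1), ∑ k, (U * Qᵀ) i k * A k.succ 0 = s * U i 0 := by
    intro i
    calc ∑ k, (U * Qᵀ) i k * A k.succ 0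
        = ∑ k, s * ((U * Qᵀ) i k * Q k 0) := by
          refine Finset.sum_congr rfl fun k _ => ?_
          rw [hcQ k]; ring
      _ = s * ∑ k, (U * Qᵀ) i k * Q k 0 := by rw [← Finset.mul_sum]
      _ = s * ((U * Qᵀ * Q) i 0) := by rw [Matrix.mul_apply]
      _ = s * U i 0 := by rw [Matrix.mul_assoc, hQorth, Matrix.mul_one]
  have hSi0 : ∀ i : Fin (n+1), (T⁻¹ * A * T) i.succ 0 = s * U i 0 := by
    intro i
    rw [hTinv, hT, sandwich_succ_zero]
    exact hWc i
  have hS0j : ∀ j : Fin (n+1), (T⁻¹ * A * T) 0 j.succ = s * U j 0 := by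
    intro j
    rw [hTinv, hT, sandwich_zero_succ]
    calc ∑ k, A 0 k.succ * (Q * U⁻¹) k j
        = ∑ k, (U * Qᵀ) j k * A k.succ 0 := by
          refine Finset.sum_congr rfl fun k _ => ?_
          rw [hA0succ k, hWe j k]; ring
      _ = s * U j 0 := hWc j
  have hSsucc : ∀ i j : Fin (n+1), (T⁻¹ * A * T) i.succ j.succ = G i j := by
    intro i j
    rw [hTinv, hT, sandwich_succ_succ, hWDR]
  have hS00 : (T⁻¹ * A * T) 0 0 = A 0 0 := by
    rw [hTinv, hT, sandwich_zero_zero]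
  -- pointwise symmetry
  have hSs : ∀ i j : Fin (n+2), (T⁻¹ * A * T) j i = (T⁻¹ * A * T) i j := by
    intro i j
    rcases Fin.eq_zero_or_eq_succ i with rfl | ⟨i', rfl⟩ <;>
      rcases Fin.eq_zero_or_eq_succ j with rfl | ⟨j', rfl⟩
    · rfl
    · rw [hSi0, hS0j]
    · rw [hSi0, hS0j]
    · rw [hSsucc, hSsucc]; exact hGsymE i' j'
  refine ⟨?_, ?_, ?_⟩
  · ext i j
    rw [Matrix.transpose_apply]
    exact hSs i j
  · intro i j hij
    rcases Fin.eq_zero_or_eq_succ i with rfl | ⟨i', rfl⟩ <;>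
      rcases Fin.eq_zero_or_eq_succ j with rfl | ⟨j', rfl⟩
    · simp at hij
    · have hj' : (0 : Fin (n+1)) < j' := by
        simp only [Fin.val_zero, Fin.val_succ] at hij
        exact Fin.lt_def.mpr (by rw [Fin.val_zero]; omega)
      rw [hS0j, hUtriang j' 0 hj', mul_zero]
    · have hi' : (0 : Fin (n+1)) < i' := by
        simp only [Fin.val_zero, Fin.val_succ] at hij
        exact Fin.lt_def.mpr (by rw [Fin.val_zero]; omega)
      rw [hSi0, hUtriang i' 0 hi', mul_zero]
    · rw [hSsucc]
      simp only [Fin.val_succ] at hij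
      rcases hij with h | h
      · rw [hGsymE j' i']
        exact hGlow j' i' (by omega)
      · exact hGlow i' j' (by omega)
  · intro i j hij
    rcases Fin.eq_zero_or_eq_succ i with rfl | ⟨i', rfl⟩ <;>
      rcases Fin.eq_zero_or_eq_succ j with rfl | ⟨j', rfl⟩
    · simp at hij
    · have hj0 : j' = 0 := by
        simp only [Fin.val_zero, Fin.val_succ] at hij
        exact Fin.ext (by rw [Fin.val_zero]; omega)
      subst hj0
      constructor
      · rw [hS0j]; exact mul_pos hs (hUdiag 0)
      · rw [hSi0]; exact mul_pos hs (hUdiag 0)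
    · simp only [Fin.val_zero, Fin.val_succ] at hij
      omega
    · simp only [Fin.val_succ] at hij
      have hj' : (j' : ℕ) = (i' : ℕ) + 1 := by omega
      have hJpos : 0 < J i' j' := hQpos i' j' hj'
      have hsub : G j' i' = U j' j' * J j' i' * U⁻¹ i' i' := hGsub j' i' hj'
      have hpos : 0 < G j' i' := by
        rw [hsub, hJsymE i' j']
        exact mul_pos (mul_pos (hUdiag j') hJpos) (hUinvdd i')
      constructor
      · rw [hSsucc, hGsymE j' i']; exact hpos
      · rw [hSsucc]; exact hpos
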